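/- For every λ > 0, τ > 0 and every ε ∈ ℝ, any solution x of the controlled system with x(0) = x₀ satisfies x(2τ) = ((e^{λτ} − 1)·e^{(λ−ε)τ} + e^{λτ})·x₀, and the multiplier satisfies (e^{λτ} − 1)·e^{(λ−ε)τ} + e^{λτ} > 1. Consequently, for x₀ ≠ 0 one has |x(2τ)| > |x₀|, so no choice of control parameters ε, τ stabilizes the origin by this scheme. -/

import Mathlib

/-- A solution of the linear system `ẋ = λx` under the oscillating perturbation
involving the difference between the current state and one delayed state:
`ẋ(t) = λx(t) + ε(t)·(x(t−τ) − x(t))` with `ε(t) = 0` on `[2kτ,(2k+1)τ)` and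
`ε(t) = ε` on `[(2k+1)τ,(2k+2)τ)`, with initial value `x₀`. -/
def IsSolSingleDelay (lam ε τ x₀ : ℝ) (x : ℝ → ℝ) : Prop :=
  ContinuousOn x (Set.Ici 0) ∧ x 0 = x₀ ∧
  (∀ k : ℕ, ∀ t ∈ Set.Ico (2 * (k : ℝ) * τ) ((2 * (k : ℝ) + 1) * τ),
      HasDerivWithinAt x (lam * x t) (Set.Ici t) t) ∧
  (∀ k : ℕ, ∀ t ∈ Set.Ico ((2 * (k : ℝ) + 1) * τ) ((2 * (k : ℝ) + 2) * τ),
      HasDerivWithinAt x (lam * x t + ε * (x (t - τ) - x t)) (Set.Ici t) t)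

/-- For the oscillating perturbation involving the difference between the current state
and one delayed state, the one-period multiplier is
`(e^{λτ} − 1)·e^{(λ−ε)τ} + e^{λτ} > 1`, so stabilization is impossible for every `ε, τ`. -/
theorem odfc_single_delay_cannot_stabilize
    (lam : ℝ) (hlam : 0 < lam) :
    ∀ ε τ : ℝ, 0 < τ → ∀ x₀ : ℝ, ∀ x : ℝ → ℝ, IsSolSingleDelay lam ε τ x₀ x →
      x (2 * τ) = ((Real.exp (lam * τ) - 1) * Real.exp ((lam - ε) * τ) +
          Real.exp (lam * τ)) * x₀ ∧
      1 < (Real.exp (lam * τ) - 1) * Real.exp ((lam - ε) * τ) + Real.exp (lam * τ) ∧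
      (x₀ ≠ 0 → |x₀| < |x (2 * τ)|) := by
  intro ε τ hτ x₀ x hsol
  obtain ⟨hcont, h0, hfree, hfed⟩ := hsol
  -- Step 1: on [0, τ], x(t) = x₀ e^{λ t}
  have h1 : ∀ y ∈ Set.Icc (0:ℝ) τ, x y * Real.exp (-lam * y) = x₀ := by
    apply eq_of_has_deriv_right_eq (f' := fun _ => (0:ℝ)) (g := fun _ => x₀)
    · intro t ht
      have hx : HasDerivWithinAt x (lam * x t) (Set.Ici t) t := by
        refine hfree 0 t ⟨?_, ?_⟩ <;> push_cast <;>
          [linarith [ht.1]; linarith [ht.2]]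
      have he : HasDerivAt (fun s => Real.exp (-lam * s))
          (Real.exp (-lam * t) * (-lam * 1)) t :=
        ((hasDerivAt_id t).const_mul (-lam)).exp
      have := hx.mul he.hasDerivWithinAt
      convert this using 1
      · rfl
      · ext y; simp only [Pi.mul_apply, neg_mul]
      ring
    · intro t ht
      exact hasDerivWithinAt_const t _ x₀
    · exact ((hcont.mono (fun y hy => hy.1)).mul
        (Real.continuous_exp.comp (continuous_const.mul continuous_id)).continuousOn)
    · exact continuousOn_const
    · simpa using h0
  have h1' : ∀ y ∈ Set.Icc (0:ℝ) τ, x y = x₀ * Real.exp (lam * y) := by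
    intro y hy
    have h := h1 y hy
    rw [neg_mul, Real.exp_neg] at h
    field_simp at h
    linarith
  -- Step 2: on [τ, 2τ], integrating factor e^{-(λ-ε)t}
  set C : ℝ := x₀ * (Real.exp (ε * τ) - Real.exp (ε * τ - lam * τ)) with hC
  have h2 : ∀ y ∈ Set.Icc τ (2*τ),
      x y * Real.exp (-(lam - ε) * y) = x₀ * Real.exp (ε * y - lam * τ) + C := by
    apply eq_of_has_deriv_right_eq
      (f' := fun s => ε * x₀ * Real.exp (ε * s - lam * τ))
      (g := fun s => x₀ * Real.exp (ε * s - lam * τ) + C)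
    · intro t ht
      have hx : HasDerivWithinAt x (lam * x t + ε * (x (t - τ) - x t)) (Set.Ici t) t := by
        refine hfed 0 t ⟨?_, ?_⟩ <;> push_cast <;>
          [linarith [ht.1]; linarith [ht.2]]
      have hxd : x (t - τ) = x₀ * Real.exp (lam * (t - τ)) :=
        h1' (t - τ) ⟨by linarith [ht.1], by linarith [ht.2, hτ]⟩
      have he : HasDerivAt (fun s => Real.exp (-(lam - ε) * s))
          (Real.exp (-(lam - ε) * t) * (-(lam - ε) * 1)) t :=
        ((hasDerivAt_id t).const_mul (-(lam - ε))).exp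
      have hE : Real.exp (lam * (t - τ)) * Real.exp (-(lam - ε) * t)
          = Real.exp (ε * t - lam * τ) := by
        rw [← Real.exp_add]; congr 1; ring
      have := hx.mul he.hasDerivWithinAt
      convert this using 1
      · rfl
      · rfl
      rw [hxd]
      linear_combination (-(ε * x₀)) * hE
    · intro t ht
      have : HasDerivAt (fun s => x₀ * Real.exp (ε * s - lam * τ) + C)
          (x₀ * (Real.exp (ε * t - lam * τ) * (ε * 1))) t :=
        ((((hasDerivAt_id t).const_mul ε).sub_const (lam * τ)).exp.const_mul x₀).add_const C
      refine this.hasDerivWithinAt.congr_deriv ?_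
      ring
    · exact ((hcont.mono (fun y hy => le_trans hτ.le hy.1)).mul
        (Real.continuous_exp.comp (continuous_const.mul continuous_id)).continuousOn)
    · exact Continuous.continuousOn (by continuity)
    · have hxτ : x τ = x₀ * Real.exp (lam * τ) := h1' τ ⟨hτ.le, le_refl τ⟩
      have hE : Real.exp (lam * τ) * Real.exp (-(lam - ε) * τ) = Real.exp (ε * τ) := by
        rw [← Real.exp_add]; congr 1; ring
      rw [hxτ, hC]
      linear_combination x₀ * hE
  -- evaluate at 2τ and plug in the exponential identities
  have hf2 := h2 (2*τ) ⟨by linarith, le_refl _⟩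
  set a : ℝ := Real.exp (lam * τ) with ha
  set b : ℝ := Real.exp (ε * τ) with hb
  have hap : 0 < a := Real.exp_pos _
  have hbp : 0 < b := Real.exp_pos _
  have e1 : Real.exp (-(lam - ε) * (2*τ)) = b * b / (a * a) := by
    rw [eq_div_iff (by positivity), ← Real.exp_add, hb, ← Real.exp_add, ← Real.exp_add]
    congr 1; ring
  have e2 : Real.exp (ε * (2*τ) - lam * τ) = b * b / a := by
    rw [eq_div_iff (by positivity), ← Real.exp_add, hb, ← Real.exp_add]
    congr 1; ring
  have e3 : Real.exp (ε * τ - lam * τ) = b / a := by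
    rw [eq_div_iff (by positivity), ← Real.exp_add]
    congr 1; ring
  have e4 : Real.exp ((lam - ε) * τ) = a / b := by
    rw [eq_div_iff (by positivity), ← Real.exp_add]
    congr 1; ring
  rw [e1, e2] at hf2
  rw [hC, e3] at hf2
  have hx2 : x (2 * τ) = (x₀ * (b * b / a) + x₀ * (b - b / a)) * (a * a / (b * b)) := by
    rw [← hf2]; field_simp
  have ha1 : 1 < a := by rw [ha, Real.one_lt_exp_iff]; exact mul_pos hlam hτ
  have hmain : x (2 * τ) = ((a - 1) * (a / b) + a) * x₀ := by
    rw [hx2]; field_simp; ring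
  refine ⟨by rw [e4]; exact hmain, ?_, ?_⟩
  · rw [e4]
    have : 0 < (a - 1) * (a / b) := mul_pos (by linarith) (div_pos hap hbp)
    linarith
  · intro hx0
    rw [hmain, abs_mul, abs_of_pos (by nlinarith [mul_pos (sub_pos.mpr ha1) (div_pos hap hbp)] :
      (0:ℝ) < (a - 1) * (a / b) + a)]
    have h₁ : 0 < |x₀| := abs_pos.mpr hx0
    nlinarith [mul_pos (sub_pos.mpr ha1) (div_pos hap hbp)]
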